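/- Let C be a skeletal finite EI category (viewed as having finitely many objects and morphisms) and k a field. The k-linear span Λ of all non-isomorphisms in the category algebra kC is a two-sided ideal of kC, and this ideal is nilpotent. -/

import Mathlib

open CategoryTheory
open scoped Classical

/-- Witness that `A` is the category algebra `kC` of the finite category `C`: it has a
`k`-basis indexed by the morphisms of `C`, the product of two basis elements is the basis
element of their composite when composable and `0` otherwise, and the identity element is
the sum of the identity morphisms. -/
structure CategoryAlgebraData (k : Type*) [Field k] (C : Type*) [Category C] [Fintype C]
    (A : Type*) [Ring A] [Algebra k A] where
  basis : Module.Basis (Σ x y : C, x ⟶ y) k A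
  basis_mul_basis : ∀ (x₁ y₁ x₂ y₂ : C) (f : x₁ ⟶ y₁) (g : x₂ ⟶ y₂),
    basis ⟨x₁, y₁, f⟩ * basis ⟨x₂, y₂, g⟩ =
      if h : y₂ = x₁ then basis ⟨x₂, y₁, g ≫ eqToHom h ≫ f⟩ else 0
  one_def : (1 : A) = ∑ x : C, basis ⟨x, x, 𝟙 x⟩

/-- Antisymmetry: in a skeletal EI category, morphisms in both directions force equality. -/
lemma ei_antisymm {C : Type*} [Category C]
    (hEI : ∀ (x : C) (f : x ⟶ x), IsIso f)
    (hskel : ∀ x y : C, (x ≅ y) → x = y)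
    {x y : C} (f : x ⟶ y) (g : y ⟶ x) : x = y := by
  have h1 : IsIso (f ≫ g) := hEI x _
  have h2 : IsIso (g ≫ f) := hEI y _
  have hf : IsIso f := by
    refine ⟨⟨g ≫ inv (f ≫ g), ?_, ?_⟩⟩
    · rw [← Category.assoc, IsIso.hom_inv_id]
    · have key : g ≫ inv (f ≫ g) = inv (g ≫ f) ≫ g := by
        calc g ≫ inv (f ≫ g)
            = (inv (g ≫ f) ≫ (g ≫ f)) ≫ (g ≫ inv (f ≫ g)) := by
              rw [IsIso.inv_hom_id, Category.id_comp]
          _ = inv (g ≫ f) ≫ g ≫ ((f ≫ g) ≫ inv (f ≫ g)) := by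
              simp only [Category.assoc]
          _ = inv (g ≫ f) ≫ g := by rw [IsIso.hom_inv_id, Category.comp_id]
      rw [key, Category.assoc, IsIso.inv_hom_id]
  exact hskel x y (asIso f)

/-- In the category algebra of a skeletal finite EI category, the span of the
non-isomorphisms is a two-sided ideal, and this ideal is nilpotent. -/
theorem stmt5 {k : Type*} [Field k] {C : Type*} [Category C] [Fintype C]
    [∀ x y : C, Finite (x ⟶ y)]
    (hEI : ∀ (x : C) (f : x ⟶ x), IsIso f)
    (hskel : ∀ x y : C, (x ≅ y) → x = y)
    {A : Type*} [Ring A] [Algebra k A] (hA : CategoryAlgebraData k C A)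
    (Λ : Submodule k A)
    (hΛ : Λ = Submodule.span k
      {a : A | ∃ (x y : C) (f : x ⟶ y), ¬ IsIso f ∧ a = hA.basis ⟨x, y, f⟩}) :
    (∀ r : A, ∀ a ∈ Λ, r * a ∈ Λ ∧ a * r ∈ Λ) ∧ ∃ n : ℕ, Λ ^ n = ⊥ := by
  haveI : Fintype (Σ x y : C, x ⟶ y) := Fintype.ofFinite _
  -- non-iso iff distinct endpoints
  have hne : ∀ {x y : C} (f : x ⟶ y), ¬ IsIso f → x ≠ y := by
    intro x y f hf hxy
    subst hxy
    exact hf (hEI x f)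
  have hiso : ∀ {x y : C} (f : x ⟶ y), IsIso f → x = y := by
    intro x y f hf
    exact hskel x y (asIso f)
  constructor
  · -- two-sided ideal
    intro r a ha
    rw [hΛ] at ha ⊢
    induction ha using Submodule.span_induction with
    | mem a hmem =>
        obtain ⟨x, y, f, hf, rfl⟩ := hmem
        have hxy : x ≠ y := hne f hf
        constructor
        · -- r * basis f
          rw [← hA.basis.sum_repr r, Finset.sum_mul]
          refine Submodule.sum_mem _ fun i _ => ?_
          rw [smul_mul_assoc]
          refine Submodule.smul_mem _ _ ?_
          obtain ⟨x₁, y₁, g⟩ := i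
          rw [hA.basis_mul_basis]
          split_ifs with h
          · refine Submodule.subset_span ⟨x, y₁, _, ?_, rfl⟩
            intro hIso
            have hx : x = y₁ := hiso _ hIso
            exact hxy (ei_antisymm hEI hskel f (eqToHom h ≫ g ≫ eqToHom hx.symm))
          · exact Submodule.zero_mem _
        · -- basis f * r
          rw [← hA.basis.sum_repr r, Finset.mul_sum]
          refine Submodule.sum_mem _ fun i _ => ?_
          rw [mul_smul_comm]
          refine Submodule.smul_mem _ _ ?_
          obtain ⟨x₂, y₂, g⟩ := i
          rw [hA.basis_mul_basis]
          split_ifs with h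
          · refine Submodule.subset_span ⟨x₂, y, _, ?_, rfl⟩
            intro hIso
            have hx : x₂ = y := hiso _ hIso
            exact hxy (ei_antisymm hEI hskel f (eqToHom hx.symm ≫ g ≫ eqToHom h))
          · exact Submodule.zero_mem _
    | zero => simp
    | add a b ha hb iha ihb =>
        exact ⟨by rw [mul_add]; exact Submodule.add_mem _ iha.1 ihb.1,
               by rw [add_mul]; exact Submodule.add_mem _ iha.2 ihb.2⟩
    | smul c a ha iha =>
        exact ⟨by rw [mul_smul_comm]; exact Submodule.smul_mem _ _ iha.1,
               by rw [smul_mul_assoc]; exact Submodule.smul_mem _ _ iha.2⟩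
  · -- nilpotency
    set ρ : C → ℕ := fun x => (Finset.univ.filter fun z : C => Nonempty (z ⟶ x)).card with hρ
    have hρ_le : ∀ y : C, ρ y ≤ Fintype.card C := fun y =>
      le_trans (Finset.card_filter_le _ _) (le_of_eq Finset.card_univ)
    have hρ_pos : ∀ x : C, 1 ≤ ρ x := by
      intro x
      refine Finset.card_pos.mpr ⟨x, ?_⟩
      simp only [Finset.mem_filter, Finset.mem_univ, true_and]
      exact ⟨𝟙 x⟩
    have hρ_lt : ∀ {x y : C}, (x ⟶ y) → x ≠ y → ρ x < ρ y := by
      intro x y f hxy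
      apply Finset.card_lt_card
      rw [Finset.ssubset_iff_of_subset]
      · exact ⟨y, by simp only [Finset.mem_filter, Finset.mem_univ, true_and]; exact ⟨𝟙 y⟩,
          by
            simp only [Finset.mem_filter, Finset.mem_univ, true_and]
            rintro ⟨g⟩
            exact hxy (ei_antisymm hEI hskel f g)⟩
      · intro z hz
        simp only [Finset.mem_filter, Finset.mem_univ, true_and] at hz ⊢
        obtain ⟨g⟩ := hz
        exact ⟨g ≫ f⟩
    set N : ℕ → Submodule k A := fun n => Submodule.span k
      {a : A | ∃ (x y : C) (f : x ⟶ y), ρ x + n ≤ ρ y ∧ a = hA.basis ⟨x, y, f⟩} with hN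
    have hΛN : Λ ≤ N 1 := by
      rw [hΛ, hN]
      apply Submodule.span_mono
      rintro a ⟨x, y, f, hf, rfl⟩
      exact ⟨x, y, f, hρ_lt f (hne f hf), rfl⟩
    have hmul : ∀ m n : ℕ, N m * N n ≤ N (m + n) := by
      intro m n
      rw [hN]
      rw [Submodule.span_mul_span]
      apply Submodule.span_le.mpr
      rintro _ ⟨a, ⟨x₁, y₁, f, hf, rfl⟩, b, ⟨x₂, y₂, g, hg, rfl⟩, rfl⟩
      show hA.basis ⟨x₁, y₁, f⟩ * hA.basis ⟨x₂, y₂, g⟩ ∈ _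
      rw [hA.basis_mul_basis]
      split_ifs with h
      · refine Submodule.subset_span ⟨x₂, y₁, _, ?_, rfl⟩
        have : ρ y₂ = ρ x₁ := by rw [h]
        omega
      · exact Submodule.zero_mem _
    have hpow : ∀ n : ℕ, Λ ^ (n + 1) ≤ N (n + 1) := by
      intro n
      induction n with
      | zero => simpa [pow_one] using hΛN
      | succ n ih =>
          rw [pow_succ]
          exact le_trans (mul_le_mul' ih hΛN) (hmul _ _)
    have hbot : N (Fintype.card C + 1) = ⊥ := by
      rw [hN, eq_bot_iff]
      apply Submodule.span_le.mpr
      rintro a ⟨x, y, f, hle, rfl⟩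
      have h1 := hρ_le y
      have h2 := hρ_pos x
      exact absurd hle (by omega)
    exact ⟨Fintype.card C + 1, le_bot_iff.mp (le_trans (hpow _) (le_of_eq hbot))⟩
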